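/- Let E be a real Banach space, T : E → E a map, and h ∈ E with Th = h. Suppose: (i) T is Fréchet differentiable at every point of some open neighborhood of h, and the derivative map g ↦ D_g is continuous at h in operator norm; (ii) limₙ ‖D_hⁿ‖^{1/n} < 1; (iii) (Πₖ)ₖ is a sequence of continuous linear idempotent operators on E with ‖Πₖ‖ ≤ 1 for all k, ‖ΠₖD_h − D_h‖ → 0, ‖Πₖh − h‖ → 0, and ‖Πₖ(Tψ) − Tψ‖ → 0 as k → ∞ for every ψ ∈ E. Then there exist an integer K and ε > 0 such that for every k ≥ K the projected fixed-point equation Πₖ(Tx) = x has a unique solution hₖ in the ball {x ∈ E : ‖x − h‖ ≤ ε}; moreover ‖hₖ − h‖ → 0 as k → ∞. (Lemma B.5 (lem:fp:exist) of the paper: existence, local uniqueness, and consistency of the projected solution in the sieve/projection method for nonlinear fixed points.) -/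

import Mathlib

open Filter

set_option maxHeartbeats 1000000 in
/-- **Lemma B.5 (lem:fp:exist).** Existence, local uniqueness and consistency of the projected
fixed point in the sieve/projection method: if `Th = h`, `T` is continuously Fréchet
differentiable at `h` with `r(D_h) < 1`, and `(Πₖ)` are idempotent linear contractions with
`‖ΠₖD_h − D_h‖ → 0`, `‖Πₖh − h‖ → 0` and `‖Πₖ(Tψ) − Tψ‖ → 0` for each `ψ`, then for some
`K` and `ε > 0` the projected equation `Πₖ(Tx) = x` has a unique solution `hₖ` in the ball
`‖x − h‖ ≤ ε` for every `k ≥ K`, and `‖hₖ − h‖ → 0`. -/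
theorem stmt_13 {E : Type*} [NormedAddCommGroup E] [NormedSpace ℝ E] [CompleteSpace E]
    (T : E → E) (h : E) (hfix : T h = h)
    (U : Set E) (hUopen : IsOpen U) (hhU : h ∈ U)
    (D : E → E →L[ℝ] E)
    (hdiff : ∀ g ∈ U, HasFDerivAt T (D g) g)
    (hcont : ContinuousAt D h)
    (hr : ∃ r : ℝ, r < 1 ∧
      Tendsto (fun n : ℕ => ‖(D h) ^ n‖ ^ (1 / (n : ℝ))) atTop (nhds r))
    (P : ℕ → E →L[ℝ] E)
    (hidem : ∀ k, (P k).comp (P k) = P k)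
    (hPnorm : ∀ k, ‖P k‖ ≤ 1)
    (hPD : Tendsto (fun k => ‖(P k).comp (D h) - D h‖) atTop (nhds 0))
    (hPh : Tendsto (fun k => ‖P k h - h‖) atTop (nhds 0))
    (hPT : ∀ ψ : E, Tendsto (fun k => ‖P k (T ψ) - T ψ‖) atTop (nhds 0)) :
    ∃ K : ℕ, ∃ ε : ℝ, 0 < ε ∧ ∃ hs : ℕ → E,
      (∀ k : ℕ, K ≤ k →
        P k (T (hs k)) = hs k ∧ ‖hs k - h‖ ≤ ε ∧
          ∀ x : E, ‖x - h‖ ≤ ε → P k (T x) = x → x = hs k) ∧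
      Tendsto (fun k => ‖hs k - h‖) atTop (nhds 0) := by
  classical
  obtain ⟨r, hr1, hrlim⟩ := hr
  have hr0 : 0 ≤ r :=
    ge_of_tendsto' hrlim (fun n => Real.rpow_nonneg (norm_nonneg _) _) |>.trans_eq rfl
  set ρ : ℝ := (r + 1) / 2 with hρdef
  have hρ0 : 0 < ρ := by simp only [hρdef]; linarith
  have hρ1 : ρ < 1 := by simp only [hρdef]; linarith
  have hrρ : r < ρ := by simp only [hρdef]; linarith
  -- eventually ‖D^n‖ ≤ ρ^n
  obtain ⟨N0, hN0⟩ := eventually_atTop.mp (hrlim.eventually_lt_const hrρ)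
  have hpow : ∀ n, N0 + 1 ≤ n → ‖(D h) ^ n‖ ≤ ρ ^ n := by
    intro n hn
    have h1 : ‖(D h) ^ n‖ ^ (1 / (n : ℝ)) < ρ := hN0 n (by omega)
    have hn0 : n ≠ 0 := by omega
    have heq : (‖(D h) ^ n‖ ^ ((n : ℝ)⁻¹)) ^ n = ‖(D h) ^ n‖ :=
      Real.rpow_inv_natCast_pow (norm_nonneg _) hn0
    calc ‖(D h) ^ n‖ = (‖(D h) ^ n‖ ^ (1 / (n : ℝ))) ^ n := by
          rw [one_div, heq]
      _ ≤ ρ ^ n := pow_le_pow_left₀ (Real.rpow_nonneg (norm_nonneg _) _) h1.le n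
  -- the constant C with ‖D^n‖ ≤ C ρ^n
  set Cb : ℝ := max 1 ((Finset.range (N0 + 1)).sup' (by simp) fun n => ‖(D h) ^ n‖ / ρ ^ n)
    with hCbdef
  have hC1 : (1 : ℝ) ≤ Cb := le_max_left _ _
  have hC0 : (0 : ℝ) < Cb := lt_of_lt_of_le one_pos hC1
  have hC : ∀ n, ‖(D h) ^ n‖ ≤ Cb * ρ ^ n := by
    intro n
    have hρn : (0 : ℝ) < ρ ^ n := pow_pos hρ0 n
    rcases le_or_gt n N0 with hle | hlt
    · have hmem : n ∈ Finset.range (N0 + 1) := by simp; omega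
      have h2 : ‖(D h) ^ n‖ / ρ ^ n ≤ Cb :=
        (Finset.le_sup' (fun n => ‖(D h) ^ n‖ / ρ ^ n) hmem).trans (le_max_right _ _)
      calc ‖(D h) ^ n‖ = ‖(D h) ^ n‖ / ρ ^ n * ρ ^ n := by field_simp
        _ ≤ Cb * ρ ^ n := mul_le_mul_of_nonneg_right h2 hρn.le
    · have := hpow n (by omega)
      nlinarith
  -- the adapted norm
  set Nn : E → ℝ := fun x => ⨆ n : ℕ, ‖((D h) ^ n) x‖ / ρ ^ n with hNdef
  have hterm : ∀ (x : E) (n : ℕ), ‖((D h) ^ n) x‖ / ρ ^ n ≤ Cb * ‖x‖ := by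
    intro x n
    rw [div_le_iff₀ (pow_pos hρ0 n)]
    calc ‖((D h) ^ n) x‖ ≤ ‖(D h) ^ n‖ * ‖x‖ := ContinuousLinearMap.le_opNorm _ _
      _ ≤ Cb * ρ ^ n * ‖x‖ := mul_le_mul_of_nonneg_right (hC n) (norm_nonneg x)
      _ = Cb * ‖x‖ * ρ ^ n := by ring
  have hbdd : ∀ x : E, BddAbove (Set.range fun n : ℕ => ‖((D h) ^ n) x‖ / ρ ^ n) := by
    intro x
    exact ⟨Cb * ‖x‖, by rintro y ⟨n, rfl⟩; exact hterm x n⟩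
  have hNle : ∀ x : E, Nn x ≤ Cb * ‖x‖ := fun x => ciSup_le (hterm x)
  have hleN : ∀ x : E, ‖x‖ ≤ Nn x := by
    intro x
    have := le_ciSup (hbdd x) 0
    simpa [hNdef] using this
  have hNnonneg : ∀ x : E, 0 ≤ Nn x := fun x => (norm_nonneg x).trans (hleN x)
  have hNadd : ∀ x y : E, Nn (x + y) ≤ Nn x + Nn y := by
    intro x y
    refine ciSup_le fun n => ?_
    have h1 : ‖((D h) ^ n) (x + y)‖ / ρ ^ n
        ≤ ‖((D h) ^ n) x‖ / ρ ^ n + ‖((D h) ^ n) y‖ / ρ ^ n := by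
      rw [← add_div]
      gcongr
      rw [map_add]
      exact norm_add_le _ _
    exact h1.trans (add_le_add (le_ciSup (hbdd x) n) (le_ciSup (hbdd y) n))
  -- parameters
  set δ : ℝ := (1 - ρ) / (8 * Cb) with hδdef
  have hδ0 : 0 < δ := by
    have : (0:ℝ) < 1 - ρ := by linarith
    positivity
  set q : ℝ := ρ + 2 * Cb * δ with hqdef
  have hq2 : 2 * Cb * δ = (1 - ρ) / 4 := by
    simp only [hδdef]
    field_simp
    ring
  have hq1 : q < 1 := by simp only [hqdef]; rw [hq2]; linarith
  have hq0 : 0 ≤ q := by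
    have : 0 ≤ 2 * Cb * δ := by positivity
    simp only [hqdef]; linarith
  have h1q : 0 < 1 - q := by linarith
  -- the ball
  obtain ⟨ε2, hε2, hball⟩ := Metric.isOpen_iff.mp hUopen h hhU
  obtain ⟨ε1, hε1, hD⟩ := Metric.continuousAt_iff.mp hcont δ hδ0
  set ε : ℝ := min ε1 ε2 / 2 with hεdef
  have hεmin : 0 < min ε1 ε2 := lt_min hε1 hε2
  have hε : 0 < ε := half_pos hεmin
  have hεlt : ε < min ε1 ε2 := half_lt_self hεmin
  have hsubU : Metric.closedBall h ε ⊆ U := by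
    intro g hg
    apply hball
    rw [Metric.mem_ball]
    exact lt_of_le_of_lt (Metric.mem_closedBall.mp hg) (hεlt.trans_le (min_le_right _ _))
  have hDnear : ∀ g ∈ Metric.closedBall h ε, ‖D g - D h‖ ≤ δ := by
    intro g hg
    have hd : dist g h < ε1 :=
      lt_of_le_of_lt (Metric.mem_closedBall.mp hg) (hεlt.trans_le (min_le_left _ _))
    have := hD hd
    rw [dist_eq_norm] at this
    exact this.le
  -- derivative of the projected map
  have hFderiv : ∀ (k : ℕ), ∀ g ∈ Metric.closedBall h ε,
      HasFDerivAt (fun x => P k (T x)) ((P k).comp (D g)) g := by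
    intro k g hg
    exact ((P k).hasFDerivAt).comp g (hdiff g (hsubU hg))
  -- key contraction estimate
  have hcontr : ∀ k : ℕ, ‖(P k).comp (D h) - D h‖ ≤ δ →
      ∀ x ∈ Metric.closedBall h ε, ∀ y ∈ Metric.closedBall h ε,
        Nn (P k (T x) - P k (T y)) ≤ q * Nn (x - y) := by
    intro k hk x hx y hy
    refine ciSup_le fun n => ?_
    -- operator norm bound for the localized derivative
    have hop : ∀ g ∈ Metric.closedBall h ε, ‖(P k).comp (D g) - D h‖ ≤ 2 * δ := by
      intro g hg
      have h1 : (P k).comp (D g) - D h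
          = (P k).comp (D g - D h) + ((P k).comp (D h) - D h) := by
        rw [ContinuousLinearMap.comp_sub]; abel
      rw [h1]
      calc ‖(P k).comp (D g - D h) + ((P k).comp (D h) - D h)‖
          ≤ ‖(P k).comp (D g - D h)‖ + ‖(P k).comp (D h) - D h‖ := norm_add_le _ _
        _ ≤ ‖P k‖ * ‖D g - D h‖ + δ :=
            add_le_add (ContinuousLinearMap.opNorm_comp_le _ _) hk
        _ ≤ 1 * δ + δ := by
            have := hDnear g hg
            have h2 := hPnorm k
            have h3 : ‖P k‖ * ‖D g - D h‖ ≤ 1 * δ :=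
              mul_le_mul h2 this (norm_nonneg _) zero_le_one
            linarith
        _ = 2 * δ := by ring
    -- mean value theorem for G z = D^n (P k (T z)) - D^(n+1) z
    set G : E → E := fun z => ((D h) ^ n) (P k (T z)) - ((D h) ^ (n + 1)) z with hGdef
    set G' : E → (E →L[ℝ] E) :=
      fun g => ((D h) ^ n).comp ((P k).comp (D g) - D h) with hG'def
    have hGderiv : ∀ g ∈ Metric.closedBall h ε,
        HasFDerivWithinAt G (G' g) (Metric.closedBall h ε) g := by
      intro g hg
      have h1 : HasFDerivAt (fun z => ((D h) ^ n) (P k (T z)))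
          (((D h) ^ n).comp ((P k).comp (D g))) g :=
        (((D h) ^ n).hasFDerivAt).comp g (hFderiv k g hg)
      have h2 : HasFDerivAt (fun z => ((D h) ^ (n + 1)) z) ((D h) ^ (n + 1)) g :=
        ((D h) ^ (n + 1)).hasFDerivAt
      have h3 := h1.sub h2
      have heq : ((D h) ^ n).comp ((P k).comp (D g)) - (D h) ^ (n + 1) = G' g := by
        simp only [hG'def]
        rw [ContinuousLinearMap.comp_sub, pow_succ, ContinuousLinearMap.mul_def]
      rw [heq] at h3
      exact h3.hasFDerivWithinAt
    have hGbound : ∀ g ∈ Metric.closedBall h ε, ‖G' g‖ ≤ Cb * ρ ^ n * (2 * δ) := by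
      intro g hg
      calc ‖G' g‖ ≤ ‖(D h) ^ n‖ * ‖(P k).comp (D g) - D h‖ :=
            ContinuousLinearMap.opNorm_comp_le _ _
        _ ≤ Cb * ρ ^ n * (2 * δ) := by
            have h1 := hC n
            have h2 := hop g hg
            have h3 : (0:ℝ) ≤ ‖(P k).comp (D g) - D h‖ := norm_nonneg _
            have h4 : (0:ℝ) ≤ Cb * ρ ^ n := mul_nonneg hC0.le (pow_pos hρ0 n).le
            exact mul_le_mul h1 h2 h3 h4
    have hMVT : ‖G x - G y‖ ≤ Cb * ρ ^ n * (2 * δ) * ‖x - y‖ :=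
      (convex_closedBall h ε).norm_image_sub_le_of_norm_hasFDerivWithin_le
        hGderiv hGbound hy hx
    -- rearrange
    have hGxy : G x - G y = ((D h) ^ n) (P k (T x) - P k (T y)) - ((D h) ^ (n + 1)) (x - y) := by
      simp only [hGdef, map_sub]
      abel
    have hkey : ‖((D h) ^ n) (P k (T x) - P k (T y))‖
        ≤ ‖((D h) ^ (n + 1)) (x - y)‖ + Cb * ρ ^ n * (2 * δ) * ‖x - y‖ := by
      have h4 : ‖((D h) ^ n) (P k (T x) - P k (T y))‖ - ‖((D h) ^ (n + 1)) (x - y)‖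
          ≤ ‖G x - G y‖ := by
        rw [hGxy]
        exact norm_sub_norm_le _ _
      linarith
    -- divide by ρ^n
    have hρn : (0:ℝ) < ρ ^ n := pow_pos hρ0 n
    rw [div_le_iff₀ hρn]
    have hA : ‖((D h) ^ (n + 1)) (x - y)‖ ≤ Nn (x - y) * ρ ^ (n + 1) := by
      have := le_ciSup (hbdd (x - y)) (n + 1)
      rw [div_le_iff₀ (pow_pos hρ0 (n + 1))] at this
      exact this
    have hB : ‖x - y‖ ≤ Nn (x - y) := hleN _
    have hmul : Cb * ρ ^ n * (2 * δ) * ‖x - y‖ ≤ Cb * ρ ^ n * (2 * δ) * Nn (x - y) :=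
      mul_le_mul_of_nonneg_left hB
        (mul_nonneg (mul_nonneg hC0.le (pow_pos hρ0 n).le) (by linarith))
    calc ‖((D h) ^ n) (P k (T x) - P k (T y))‖
        ≤ ‖((D h) ^ (n + 1)) (x - y)‖ + Cb * ρ ^ n * (2 * δ) * ‖x - y‖ := hkey
      _ ≤ Nn (x - y) * ρ ^ (n + 1) + Cb * ρ ^ n * (2 * δ) * Nn (x - y) := add_le_add hA hmul
      _ = (ρ + 2 * Cb * δ) * Nn (x - y) * ρ ^ n := by rw [pow_succ]; ring
      _ = q * Nn (x - y) * ρ ^ n := by rw [hqdef]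
  -- existence of the fixed point for suitable k
  have exists_fp : ∀ k : ℕ, ‖(P k).comp (D h) - D h‖ ≤ δ →
      Cb * ‖P k h - h‖ ≤ (1 - q) * ε →
      ∃ l : E, ‖l - h‖ ≤ ε ∧ P k (T l) = l := by
    intro k hk1 hk2
    set F : E → E := fun x => P k (T x) with hFdef
    have hFh : F h = P k h := by simp only [hFdef, hfix]
    set x : ℕ → E := fun n => F^[n] h with hxdef
    have hx0 : x 0 = h := rfl
    have hxs : ∀ n, x (n + 1) = F (x n) := fun n => Function.iterate_succ_apply' F n h
    have hhb : h ∈ Metric.closedBall h ε := Metric.mem_closedBall_self hε.le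
    have hinv : ∀ n, Nn (x n - h) ≤ ε := by
      intro n
      induction n with
      | zero =>
        rw [hx0, sub_self]
        have h0 : Nn 0 ≤ Cb * ‖(0 : E)‖ := hNle 0
        rw [norm_zero, mul_zero] at h0
        exact h0.trans hε.le
      | succ n ih =>
        have hxball : x n ∈ Metric.closedBall h ε := by
          rw [Metric.mem_closedBall, dist_eq_norm]
          exact (hleN _).trans ih
        have h1 : Nn (F (x n) - F h) ≤ q * Nn (x n - h) := hcontr k hk1 _ hxball _ hhb
        have h2 : Nn (F h - h) ≤ Cb * ‖P k h - h‖ := by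
          rw [hFh]; exact hNle _
        have hdec : x (n + 1) - h = (F (x n) - F h) + (F h - h) := by
          rw [hxs]; abel
        calc Nn (x (n + 1) - h) ≤ Nn (F (x n) - F h) + Nn (F h - h) := by
              rw [hdec]; exact hNadd _ _
          _ ≤ q * ε + (1 - q) * ε := by
              have h3 : q * Nn (x n - h) ≤ q * ε := mul_le_mul_of_nonneg_left ih hq0
              linarith
          _ = ε := by ring
    have hxball : ∀ n, x n ∈ Metric.closedBall h ε := by
      intro n
      rw [Metric.mem_closedBall, dist_eq_norm]
      exact (hleN _).trans (hinv n)
    have hstep : ∀ n, Nn (x (n + 1) - x n) ≤ q ^ n * Nn (x 1 - x 0) := by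
      intro n
      induction n with
      | zero => simp
      | succ n ih =>
        have h1 : Nn (F (x (n + 1)) - F (x n)) ≤ q * Nn (x (n + 1) - x n) :=
          hcontr k hk1 _ (hxball _) _ (hxball _)
        calc Nn (x (n + 2) - x (n + 1)) = Nn (F (x (n + 1)) - F (x n)) := by
              rw [hxs (n + 1), hxs n]
          _ ≤ q * Nn (x (n + 1) - x n) := h1
          _ ≤ q * (q ^ n * Nn (x 1 - x 0)) := mul_le_mul_of_nonneg_left ih hq0
          _ = q ^ (n + 1) * Nn (x 1 - x 0) := by ring
    have hdist : ∀ n, dist (x n) (x (n + 1)) ≤ Nn (x 1 - x 0) * q ^ n := by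
      intro n
      rw [dist_eq_norm, norm_sub_rev]
      calc ‖x (n + 1) - x n‖ ≤ Nn (x (n + 1) - x n) := hleN _
        _ ≤ q ^ n * Nn (x 1 - x 0) := hstep n
        _ = Nn (x 1 - x 0) * q ^ n := mul_comm _ _
    have hcauchy : CauchySeq x := cauchySeq_of_le_geometric q (Nn (x 1 - x 0)) hq1 hdist
    obtain ⟨l, hl⟩ := cauchySeq_tendsto_of_complete hcauchy
    have hlball : l ∈ Metric.closedBall h ε :=
      Metric.isClosed_closedBall.mem_of_tendsto hl (Eventually.of_forall hxball)
    -- F is continuous on the ball, so l is a fixed point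
    have hlip : ∀ n, ‖F (x n) - F l‖ ≤ q * Cb * ‖x n - l‖ := by
      intro n
      calc ‖F (x n) - F l‖ ≤ Nn (F (x n) - F l) := hleN _
        _ ≤ q * Nn (x n - l) := hcontr k hk1 _ (hxball n) _ hlball
        _ ≤ q * (Cb * ‖x n - l‖) := mul_le_mul_of_nonneg_left (hNle _) hq0
        _ = q * Cb * ‖x n - l‖ := by ring
    have hxl : Tendsto (fun n => ‖x n - l‖) atTop (nhds 0) := by
      rw [← tendsto_iff_norm_sub_tendsto_zero]
      exact hl
    have hFxl : Tendsto (fun n => F (x n)) atTop (nhds (F l)) := by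
      rw [tendsto_iff_norm_sub_tendsto_zero]
      have hg : Tendsto (fun n => q * Cb * ‖x n - l‖) atTop (nhds 0) := by
        simpa using hxl.const_mul (q * Cb)
      exact squeeze_zero (fun n => norm_nonneg _) hlip hg
    have hxsucc : Tendsto (fun n => x (n + 1)) atTop (nhds l) :=
      hl.comp (tendsto_add_atTop_nat 1)
    have heqseq : (fun n => x (n + 1)) = fun n => F (x n) := funext hxs
    rw [heqseq] at hxsucc
    have hFl : F l = l := tendsto_nhds_unique hFxl hxsucc
    refine ⟨l, ?_, hFl⟩
    rw [Metric.mem_closedBall, dist_eq_norm] at hlball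
    exact hlball
  -- choose K
  have hev1 : ∀ᶠ k in atTop, ‖(P k).comp (D h) - D h‖ ≤ δ :=
    (hPD.eventually_lt_const hδ0).mono fun k hk => hk.le
  have hev2 : ∀ᶠ k in atTop, Cb * ‖P k h - h‖ ≤ (1 - q) * ε := by
    have h0 : Tendsto (fun k => Cb * ‖P k h - h‖) atTop (nhds 0) := by
      simpa using hPh.const_mul Cb
    have hpos : (0:ℝ) < (1 - q) * ε := by positivity
    exact (h0.eventually_lt_const hpos).mono fun k hk => hk.le
  obtain ⟨K, hK⟩ := eventually_atTop.mp (hev1.and hev2)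
  -- define the sequence of fixed points
  have hspec : ∀ k : ℕ, K ≤ k → ∃ l : E, ‖l - h‖ ≤ ε ∧ P k (T l) = l :=
    fun k hk => exists_fp k (hK k hk).1 (hK k hk).2
  set hs : ℕ → E := fun k => if hk : K ≤ k then (hspec k hk).choose else h with hsdef
  have hs_prop : ∀ k : ℕ, K ≤ k → ‖hs k - h‖ ≤ ε ∧ P k (T (hs k)) = hs k := by
    intro k hk
    simp only [hsdef, dif_pos hk]
    exact ⟨(hspec k hk).choose_spec.1, (hspec k hk).choose_spec.2⟩
  -- uniqueness
  have huniq : ∀ k : ℕ, K ≤ k → ∀ a b : E, ‖a - h‖ ≤ ε → ‖b - h‖ ≤ ε →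
      P k (T a) = a → P k (T b) = b → a = b := by
    intro k hk a b ha hb hfa hfb
    have hab : a ∈ Metric.closedBall h ε := by rw [Metric.mem_closedBall, dist_eq_norm]; exact ha
    have hbb : b ∈ Metric.closedBall h ε := by rw [Metric.mem_closedBall, dist_eq_norm]; exact hb
    have h1 : Nn (a - b) ≤ q * Nn (a - b) := by
      have := hcontr k (hK k hk).1 a hab b hbb
      rw [hfa, hfb] at this
      exact this
    have h2 : Nn (a - b) ≤ 0 := by nlinarith [hNnonneg (a - b)]
    have h3 : ‖a - b‖ ≤ 0 := (hleN _).trans h2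
    have h4 : a - b = 0 := norm_le_zero_iff.mp h3
    exact sub_eq_zero.mp h4
  -- consistency bound
  have hbound : ∀ k : ℕ, K ≤ k → ‖hs k - h‖ ≤ Cb / (1 - q) * ‖P k h - h‖ := by
    intro k hk
    obtain ⟨h1, h2⟩ := hs_prop k hk
    have hsball : hs k ∈ Metric.closedBall h ε := by
      rw [Metric.mem_closedBall, dist_eq_norm]; exact h1
    have hhb : h ∈ Metric.closedBall h ε := Metric.mem_closedBall_self hε.le
    have hdec : hs k - h = (P k (T (hs k)) - P k (T h)) + (P k h - h) := by
      rw [h2, hfix]; abel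
    have h3 : Nn (hs k - h) ≤ q * Nn (hs k - h) + Cb * ‖P k h - h‖ := by
      calc Nn (hs k - h) ≤ Nn (P k (T (hs k)) - P k (T h)) + Nn (P k h - h) := by
            rw [hdec]; exact hNadd _ _
        _ ≤ q * Nn (hs k - h) + Cb * ‖P k h - h‖ :=
            add_le_add (hcontr k (hK k hk).1 _ hsball _ hhb) (hNle _)
    have h4 : (1 - q) * Nn (hs k - h) ≤ Cb * ‖P k h - h‖ := by linarith
    have h5 : Nn (hs k - h) ≤ Cb / (1 - q) * ‖P k h - h‖ := by
      rw [div_mul_eq_mul_div, le_div_iff₀ h1q, mul_comm]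
      exact h4
    exact (hleN _).trans h5
  refine ⟨K, ε, hε, hs, fun k hk => ⟨(hs_prop k hk).2, (hs_prop k hk).1,
    fun z hz hfz => huniq k hk z (hs k) hz (hs_prop k hk).1 hfz (hs_prop k hk).2⟩, ?_⟩
  -- convergence
  have hg : Tendsto (fun k => Cb / (1 - q) * ‖P k h - h‖) atTop (nhds 0) := by
    simpa using hPh.const_mul (Cb / (1 - q))
  refine squeeze_zero' (Eventually.of_forall fun k => norm_nonneg _) ?_ hg
  exact eventually_atTop.mpr ⟨K, fun k hk => hbound k hk⟩
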